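/- Let v_1, …, v_n ∈ ℝ^d be finitely many points, let k ∈ {0, …, d}, and let c_k be the k-th corner of (v_1, …, v_n). Then tconv{v_1, …, v_n} ⊆ c_k + S̄_k; explicitly, every x ∈ tconv{v_1, …, v_n} satisfies x_k − (c_k)_k ≤ x_j − (c_k)_j for all j ∈ {0, …, d} (with x_0 := 0 and (c_k)_0 := 0). -/
import Mathlib


open Set

noncomputable section

/-- Extended (homogeneous) coordinates of a point of `TA^d ≅ ℝ^d`:
the 0-th coordinate is normalized to `0`. -/
def ext {d : ℕ} (x : Fin d → ℝ) : Fin (d + 1) → ℝ := Fin.cons 0 x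

/-- The tropical combination of `(l, x)` and `(m, y)`. -/
def tropComb {d : ℕ} (l m : ℝ) (x y : Fin d → ℝ) : Fin d → ℝ :=
  fun i => min (l + x i) (m + y i) - min l m

/-- A set is tropically convex if it is closed under tropical combinations. -/
def TropConvex {d : ℕ} (S : Set (Fin d → ℝ)) : Prop :=
  ∀ x ∈ S, ∀ y ∈ S, ∀ l m : ℝ, tropComb l m x y ∈ S

/-- The tropical convex hull: the intersection of all tropically convex supersets. -/
def tconv {d : ℕ} (V : Set (Fin d → ℝ)) : Set (Fin d → ℝ) :=
  ⋂₀ {S : Set (Fin d → ℝ) | TropConvex S ∧ V ⊆ S}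

/-- A tropical polytope is the tropical convex hull of a finite set. -/
def IsTropPolytope {d : ℕ} (P : Set (Fin d → ℝ)) : Prop :=
  ∃ V : Finset (Fin d → ℝ), P = tconv (V : Set (Fin d → ℝ))

/-- A polytrope is a tropical polytope which is also convex in the ordinary sense. -/
def IsPolytrope {d : ℕ} (P : Set (Fin d → ℝ)) : Prop :=
  IsTropPolytope P ∧ Convex ℝ P

/-- The `k`-th corner of the points `v_1, …, v_n`:
`(c_k)_j = min_i (v_{i,j} - v_{i,k}) - min_i (v_{i,0} - v_{i,k})` for `j = 1, …, d`
(homogeneous coordinates, `v_{i,0} := 0`). -/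
def corner {d n : ℕ} (v : Fin n → Fin d → ℝ) (k : Fin (d + 1)) : Fin d → ℝ :=
  fun j => (⨅ i, (ext (v i) j.succ - ext (v i) k)) - (⨅ i, (ext (v i) 0 - ext (v i) k))

lemma ext_tropComb {d : ℕ} (l m : ℝ) (x y : Fin d → ℝ) (j : Fin (d + 1)) :
    ext (tropComb l m x y) j = min (l + ext x j) (m + ext y j) - min l m := by
  induction j using Fin.cases with
  | zero => simp [_root_.ext, tropComb]
  | succ j => simp [_root_.ext, tropComb]

/-- The tropical convex hull of `v_1, …, v_n` is contained in the cornered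
tropical halfspace `c_k + S̄_k`: every `x ∈ tconv{v_1,…,v_n}` satisfies
`x_k - (c_k)_k ≤ x_j - (c_k)_j` for all `j` (homogeneous coordinates). -/
theorem tconv_subset_cornered_halfspace {d n : ℕ} (hn : 0 < n)
    (v : Fin n → Fin d → ℝ) (k : Fin (d + 1)) :
    ∀ x ∈ tconv (Set.range v), ∀ j : Fin (d + 1),
      ext x k - ext (corner v k) k ≤ ext x j - ext (corner v k) j := by
  haveI : Nonempty (Fin n) := ⟨⟨0, hn⟩⟩
  set c := corner v k with hc
  set B : Fin (d + 1) → ℝ := fun j => ⨅ i, (ext (v i) j - ext (v i) k) with hB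
  have hextc : ∀ j, ext c j = B j - B 0 := by
    intro j
    induction j using Fin.cases with
    | zero => simp [_root_.ext]
    | succ j => rfl
  have hBk : B k = 0 := by
    simp only [hB, sub_self]
    exact ciInf_const
  have hBle : ∀ j (i : Fin n), B j ≤ ext (v i) j - ext (v i) k := by
    intro j i
    exact ciInf_le (Set.Finite.bddBelow (Set.finite_range _)) i
  set S : Set (Fin d → ℝ) :=
    {x | ∀ j, ext x k - ext c k ≤ ext x j - ext c j} with hS
  have hSconv : TropConvex S := by
    intro x hx y hy l m j
    have hxj := hx j
    have hyj := hy j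
    simp only [ext_tropComb]
    set a := ext c j - ext c k with ha
    have h1 : min (l + ext x k) (m + ext y k) + a ≤ min (l + ext x j) (m + ext y j) := by
      rw [← min_add_add_right]
      exact min_le_min (by linarith) (by linarith)
    linarith
  have hVS : Set.range v ⊆ S := by
    rintro _ ⟨i, rfl⟩ j
    have h1 := hBle j i
    have h2 := hextc j
    have h3 := hextc k
    rw [h2, h3]
    linarith
  intro x hx j
  exact hx S ⟨hSconv, hVS⟩ j
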